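/- Let p and q be distinct primes with q ≡ 1 (mod 4) and with p a quadratic residue modulo q, and let N be a square-free positive integer dividing (q−1)/4 and coprime to p. In the quaternion algebra (p,q/ℚ), the ℤ-submodule spanned by the four elements 1, N·I, (1+J)/2, and (I+K)/2 is closed under multiplication and contains 1, hence is a subring; moreover it is a free ℤ-module of rank 4 whose ℚ-span is all of (p,q/ℚ) (i.e. it is an order of (p,q/ℚ)). -/

import Mathlib

open Quaternion

set_option maxHeartbeats 1000000 in
/-- Let `p, q` be distinct primes with `q ≡ 1 (mod 4)` and `p` a quadratic
residue modulo `q`, and let `N` be a square-free positive integer dividing `(q−1)/4` and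
coprime to `p`. The `ℤ`-submodule of the quaternion algebra `(p,q/ℚ)` spanned by `1`, `N·I`,
`(1+J)/2` and `(I+K)/2` contains `1`, is closed under multiplication, and is a free
`ℤ`-module of rank `4` whose `ℚ`-span is the whole algebra (i.e. it is an order of
`(p,q/ℚ)`). -/
theorem eichler_order_discriminant_pq (p q : ℕ) (hp : p.Prime) (hq : q.Prime) (hpq : p ≠ q)
    (hq4 : q % 4 = 1) (hres : IsSquare (p : ZMod q))
    (N : ℕ) (hN : 0 < N) (hsf : Squarefree N) (hdvd : N ∣ (q - 1) / 4)
    (hcop : Nat.Coprime N p) :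
    ∀ M : Submodule ℤ ℍ[ℚ, (p : ℚ), (q : ℚ)],
      M = Submodule.span ℤ
        ({1, ⟨0, (N : ℚ), 0, 0⟩, ⟨1/2, 0, 1/2, 0⟩, ⟨0, 1/2, 0, 1/2⟩} :
          Set ℍ[ℚ, (p : ℚ), (q : ℚ)]) →
      (1 : ℍ[ℚ, (p : ℚ), (q : ℚ)]) ∈ M ∧
      (∀ x ∈ M, ∀ y ∈ M, x * y ∈ M) ∧
      Module.Free ℤ M ∧ Module.finrank ℤ M = 4 ∧
      Submodule.span ℚ (M : Set ℍ[ℚ, (p : ℚ), (q : ℚ)]) = ⊤ := by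
  intro M hM
  obtain ⟨k, hk⟩ := hdvd
  have h4 : 4 ∣ q - 1 := by omega
  have hm4 : 4 * ((q - 1) / 4) = q - 1 := Nat.mul_div_cancel' h4
  have hq1 : 1 ≤ q := hq.one_lt.le
  have hqQ : (q : ℚ) = 4 * (N * k) + 1 := by
    have : 4 * (N * k) + 1 = q := by omega
    exact_mod_cast this.symm
  -- the generators
  set g1 : ℍ[ℚ, (p : ℚ), (q : ℚ)] := 1 with hg1
  set g2 : ℍ[ℚ, (p : ℚ), (q : ℚ)] := ⟨0, (N : ℚ), 0, 0⟩ with hg2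
  set g3 : ℍ[ℚ, (p : ℚ), (q : ℚ)] := ⟨1/2, 0, 1/2, 0⟩ with hg3
  set g4 : ℍ[ℚ, (p : ℚ), (q : ℚ)] := ⟨0, 1/2, 0, 1/2⟩ with hg4
  set S : Set ℍ[ℚ, (p : ℚ), (q : ℚ)] := {g1, g2, g3, g4} with hS
  subst hM
  have m1 : g1 ∈ Submodule.span ℤ S := Submodule.subset_span (by simp [hS])
  have m2 : g2 ∈ Submodule.span ℤ S := Submodule.subset_span (by simp [hS])
  have m3 : g3 ∈ Submodule.span ℤ S := Submodule.subset_span (by simp [hS])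
  have m4 : g4 ∈ Submodule.span ℤ S := Submodule.subset_span (by simp [hS])
  -- product identities
  have P22 : g2 * g2 = ((N ^ 2 * p : ℕ) : ℤ) • g1 := by
    ext <;> simp [hg1, hg2, QuaternionAlgebra.re_mul, QuaternionAlgebra.imI_mul,
      QuaternionAlgebra.imJ_mul, QuaternionAlgebra.imK_mul, QuaternionAlgebra.re_smul, QuaternionAlgebra.imI_smul, QuaternionAlgebra.imJ_smul, QuaternionAlgebra.imK_smul, ← Int.cast_smul_eq_zsmul ℚ, smul_eq_mul] <;> push_cast <;> ring
  have P23 : g2 * g3 = (N : ℤ) • g4 := by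
    ext <;> simp [hg2, hg3, hg4, QuaternionAlgebra.re_mul, QuaternionAlgebra.imI_mul,
      QuaternionAlgebra.imJ_mul, QuaternionAlgebra.imK_mul, QuaternionAlgebra.re_smul, QuaternionAlgebra.imI_smul, QuaternionAlgebra.imJ_smul, QuaternionAlgebra.imK_smul, ← Int.cast_smul_eq_zsmul ℚ, smul_eq_mul] <;> push_cast <;> ring
  have P24 : g2 * g4 = ((N * p : ℕ) : ℤ) • g3 := by
    ext <;> simp [hg2, hg3, hg4, QuaternionAlgebra.re_mul, QuaternionAlgebra.imI_mul,
      QuaternionAlgebra.imJ_mul, QuaternionAlgebra.imK_mul, QuaternionAlgebra.re_smul, QuaternionAlgebra.imI_smul, QuaternionAlgebra.imJ_smul, QuaternionAlgebra.imK_smul, ← Int.cast_smul_eq_zsmul ℚ, smul_eq_mul] <;> push_cast <;> ring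
  have P32 : g3 * g2 = g2 + (-(N : ℤ)) • g4 := by
    ext <;> simp [hg2, hg3, hg4, QuaternionAlgebra.re_mul, QuaternionAlgebra.imI_mul,
      QuaternionAlgebra.imJ_mul, QuaternionAlgebra.imK_mul, QuaternionAlgebra.re_smul, QuaternionAlgebra.imI_smul, QuaternionAlgebra.imJ_smul, QuaternionAlgebra.imK_smul, ← Int.cast_smul_eq_zsmul ℚ, smul_eq_mul] <;> push_cast <;> ring
  have P33 : g3 * g3 = ((N * k : ℕ) : ℤ) • g1 + g3 := by
    ext <;> simp [hg1, hg3, QuaternionAlgebra.re_mul, QuaternionAlgebra.imI_mul,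
      QuaternionAlgebra.imJ_mul, QuaternionAlgebra.imK_mul, QuaternionAlgebra.re_smul, QuaternionAlgebra.imI_smul, QuaternionAlgebra.imJ_smul, QuaternionAlgebra.imK_smul, ← Int.cast_smul_eq_zsmul ℚ, smul_eq_mul, hqQ] <;> push_cast <;> ring
  have P34 : g3 * g4 = (-(k : ℤ)) • g2 := by
    ext <;> simp [hg2, hg3, hg4, QuaternionAlgebra.re_mul, QuaternionAlgebra.imI_mul,
      QuaternionAlgebra.imJ_mul, QuaternionAlgebra.imK_mul, QuaternionAlgebra.re_smul, QuaternionAlgebra.imI_smul, QuaternionAlgebra.imJ_smul, QuaternionAlgebra.imK_smul, ← Int.cast_smul_eq_zsmul ℚ, smul_eq_mul, hqQ] <;> push_cast <;> ring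
  have P42 : g4 * g2 = ((N * p : ℕ) : ℤ) • g1 + (-((N * p : ℕ) : ℤ)) • g3 := by
    ext <;> simp [hg1, hg2, hg3, hg4, QuaternionAlgebra.re_mul, QuaternionAlgebra.imI_mul,
      QuaternionAlgebra.imJ_mul, QuaternionAlgebra.imK_mul, QuaternionAlgebra.re_smul, QuaternionAlgebra.imI_smul, QuaternionAlgebra.imJ_smul, QuaternionAlgebra.imK_smul, ← Int.cast_smul_eq_zsmul ℚ, smul_eq_mul] <;> push_cast <;> ring
  have P43 : g4 * g3 = (k : ℤ) • g2 + g4 := by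
    ext <;> simp [hg2, hg3, hg4, QuaternionAlgebra.re_mul, QuaternionAlgebra.imI_mul,
      QuaternionAlgebra.imJ_mul, QuaternionAlgebra.imK_mul, QuaternionAlgebra.re_smul, QuaternionAlgebra.imI_smul, QuaternionAlgebra.imJ_smul, QuaternionAlgebra.imK_smul, ← Int.cast_smul_eq_zsmul ℚ, smul_eq_mul, hqQ] <;> push_cast <;> ring
  have P44 : g4 * g4 = (-((p * (N * k) : ℕ) : ℤ)) • g1 := by
    ext <;> simp [hg1, hg4, QuaternionAlgebra.re_mul, QuaternionAlgebra.imI_mul,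
      QuaternionAlgebra.imJ_mul, QuaternionAlgebra.imK_mul, QuaternionAlgebra.re_smul, QuaternionAlgebra.imI_smul, QuaternionAlgebra.imJ_smul, QuaternionAlgebra.imK_smul, ← Int.cast_smul_eq_zsmul ℚ, smul_eq_mul, hqQ] <;> push_cast <;> ring
  have key : ∀ x ∈ S, ∀ y ∈ S, x * y ∈ Submodule.span ℤ S := by
    intro x hx y hy
    simp only [hS, Set.mem_insert_iff, Set.mem_singleton_iff] at hx hy
    rcases hx with rfl | rfl | rfl | rfl <;> rcases hy with rfl | rfl | rfl | rfl
    · simpa [hg1] using m1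
    · simpa [hg1] using m2
    · simpa [hg1] using m3
    · simpa [hg1] using m4
    · simpa [hg1] using m2
    · rw [P22]; exact Submodule.smul_mem _ _ m1
    · rw [P23]; exact Submodule.smul_mem _ _ m4
    · rw [P24]; exact Submodule.smul_mem _ _ m3
    · simpa [hg1] using m3
    · rw [P32]; exact add_mem m2 (Submodule.smul_mem _ _ m4)
    · rw [P33]; exact add_mem (Submodule.smul_mem _ _ m1) m3
    · rw [P34]; exact Submodule.smul_mem _ _ m2
    · simpa [hg1] using m4
    · rw [P42]; exact add_mem (Submodule.smul_mem _ _ m1) (Submodule.smul_mem _ _ m3)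
    · rw [P43]; exact add_mem (Submodule.smul_mem _ _ m2) m4
    · rw [P44]; exact Submodule.smul_mem _ _ m1
  have hmul : ∀ x ∈ Submodule.span ℤ S, ∀ y ∈ Submodule.span ℤ S,
      x * y ∈ Submodule.span ℤ S := by
    intro x hx y hy
    refine Submodule.span_induction₂ (p := fun x y _ _ => x * y ∈ Submodule.span ℤ S)
      (fun x y hx hy => key x hx y hy) ?_ ?_ ?_ ?_ ?_ ?_ hx hy
    · intro y _; rw [zero_mul]; exact zero_mem _
    · intro x _; rw [mul_zero]; exact zero_mem _
    · intro a b c _ _ _ h1 h2; rw [add_mul]; exact add_mem h1 h2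
    · intro a b c _ _ _ h1 h2; rw [mul_add]; exact add_mem h1 h2
    · intro r a b _ _ h; rw [smul_mul_assoc]; exact Submodule.smul_mem _ _ h
    · intro r a b _ _ h; rw [mul_smul_comm]; exact Submodule.smul_mem _ _ h
  -- linear independence
  set v : Fin 4 → ℍ[ℚ, (p : ℚ), (q : ℚ)] := ![g1, g2, g3, g4] with hv
  have hli : LinearIndependent ℚ v := by
    rw [Fintype.linearIndependent_iff]
    intro g hg i
    have h0 := congrArg QuaternionAlgebra.re hg
    have h1 := congrArg QuaternionAlgebra.imI hg
    have h2 := congrArg QuaternionAlgebra.imJ hg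
    have h3 := congrArg QuaternionAlgebra.imK hg
    simp [hv, hg1, hg2, hg3, hg4, Fin.sum_univ_four] at h0 h1 h2 h3
    have hNQ : (N : ℚ) ≠ 0 := Nat.cast_ne_zero.mpr hN.ne'
    have e1 : g 1 = 0 := by
      have h1' : g 1 * (N : ℚ) = 0 := by rw [h3] at h1; linarith
      rcases mul_eq_zero.mp h1' with h | h
      · exact h
      · exact absurd h hNQ
    have e0 : g 0 = 0 := by rw [h2] at h0; linarith
    fin_cases i
    exacts [e0, e1, h2, h3]
  have hliZ : LinearIndependent ℤ v :=
    hli.restrict_scalars (by intro r s h; simpa [zsmul_eq_mul] using h)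
  have hrange : Set.range v = S := by
    rw [hv, hS]
    ext x
    constructor
    · rintro ⟨i, rfl⟩; fin_cases i <;> simp
    · intro h
      simp only [Set.mem_insert_iff, Set.mem_singleton_iff] at h
      rcases h with rfl | rfl | rfl | rfl
      exacts [⟨0, rfl⟩, ⟨1, rfl⟩, ⟨2, rfl⟩, ⟨3, rfl⟩]
  rw [← hrange] at m1 hmul ⊢
  have b : Module.Basis (Fin 4) ℤ (Submodule.span ℤ (Set.range v)) := Module.Basis.span hliZ
  refine ⟨m1, hmul, Module.Free.of_basis b, ?_, ?_⟩
  · rw [Module.finrank_eq_card_basis b, Fintype.card_fin]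
  · have hspan : Submodule.span ℚ (Set.range v) = ⊤ :=
      hli.span_eq_top_of_card_eq_finrank (by simp [QuaternionAlgebra.finrank_eq_four])
    rw [eq_top_iff, ← hspan]
    exact Submodule.span_mono Submodule.subset_span
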